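/- Let L be the lattice with basis C, F, E_1, ..., E_7 as above, K = -2C - 2F + Σ E_n, and let G be a group of automorphisms of L preserving the form, F and K, such that for every j ∈ {1,...,7} there exists τ_j ∈ G with τ_j(E_j) = F - E_j. Then the sublattice of G-invariant elements of L equals Z·K ⊕ Z·F. -/

import Mathlib

/-- The geometric Picard lattice of a standard rational conic bundle of degree 1:
the free abelian group with basis `C, F, E₁, …, E₇`, realized as `Fin 9 → ℤ`
(coordinate 0 for `C`, coordinate 1 for `F`, coordinates 2–8 for `E₁,…,E₇`). -/
abbrev Pic1 := Fin 9 → ℤ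

/-- The index in `Fin 9` of the basis vector `E_n`. -/
def eIdx (n : Fin 7) : Fin 9 := ⟨n.1 + 2, by have := n.isLt; omega⟩

/-- The basis class `C`. -/
def Cv : Pic1 := fun i => if i = 0 then 1 else 0

/-- The basis class `F` (the class of a fiber). -/
def Fv : Pic1 := fun i => if i = 1 then 1 else 0

/-- The basis class `E_n`. -/
def Ev (n : Fin 7) : Pic1 := fun i => if i = eIdx n then 1 else 0

/-- The intersection pairing: `C·C = F·F = 0`, `C·F = 1`, `E_i·E_i = -1`, and all
other products among basis vectors vanish. -/
def B (v w : Pic1) : ℤ :=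
  v 0 * w 1 + v 1 * w 0 - ∑ n : Fin 7, v (eIdx n) * w (eIdx n)

/-- The canonical class `K = -2C - 2F + E₁ + ⋯ + E₇`. -/
def Kv : Pic1 := fun i => -2 * Cv i - 2 * Fv i + ∑ n : Fin 7, Ev n i

lemma eIdx_ne0 (j : Fin 7) : eIdx j ≠ 0 := by
  intro h; have h' : j.1 + 2 = 0 := congrArg Fin.val h; omega
lemma eIdx_ne1 (j : Fin 7) : eIdx j ≠ 1 := by simp [eIdx, Fin.ext_iff]
lemma eIdx_inj {a b : Fin 7} (h : eIdx a = eIdx b) : a = b := by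
  simp [eIdx, Fin.ext_iff] at h ⊢; omega

lemma sum_pick (v : Pic1) (j : Fin 7) :
    (∑ n : Fin 7, v (eIdx n) * (if eIdx n = eIdx j then (1:ℤ) else 0)) = v (eIdx j) := by
  rw [Finset.sum_eq_single j]
  · simp
  · intro b _ hb
    rw [if_neg (fun he => hb (eIdx_inj he)), mul_zero]
  · simp

lemma B_Ev (v : Pic1) (j : Fin 7) : B v (Ev j) = -v (eIdx j) := by
  simp only [B, Ev]
  rw [if_neg (Ne.symm (eIdx_ne1 j)), if_neg (Ne.symm (eIdx_ne0 j)), sum_pick]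
  ring

lemma B_FE (v : Pic1) (j : Fin 7) : B v (Fv - Ev j) = v 0 + v (eIdx j) := by
  simp only [B, Fv, Ev, Pi.sub_apply]
  rw [if_neg (Ne.symm (eIdx_ne1 j)), if_neg (Ne.symm (eIdx_ne0 j))]
  have h : ∀ n : Fin 7, v (eIdx n) * ((if eIdx n = 1 then (1:ℤ) else 0) -
      (if eIdx n = eIdx j then 1 else 0)) =
      - (v (eIdx n) * (if eIdx n = eIdx j then (1:ℤ) else 0)) := by
    intro n; rw [if_neg (eIdx_ne1 n)]; ring
  rw [Finset.sum_congr rfl (fun n _ => h n), Finset.sum_neg_distrib, sum_pick]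
  norm_num



/-- Let `G` be a group of automorphisms of the lattice `L` preserving the form, `F`
and `K`, such that for every `j ∈ {1,…,7}` some `τⱼ ∈ G` sends `Eⱼ` to `F - Eⱼ`.
Then the `G`-invariant elements of `L` are exactly `ℤ·K ⊕ ℤ·F`. -/
theorem invariant_sublattice_eq_ZK_plus_ZF
    (G : Subgroup ((Fin 9 → ℤ) ≃ₗ[ℤ] (Fin 9 → ℤ)))
    (hform : ∀ τ ∈ G, ∀ v w : Pic1, B (τ v) (τ w) = B v w)
    (hF : ∀ τ ∈ G, τ Fv = Fv)
    (hK : ∀ τ ∈ G, τ Kv = Kv)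
    (hswap : ∀ j : Fin 7, ∃ τ ∈ G, τ (Ev j) = Fv - Ev j) :
    ∀ v : Pic1, (∀ τ ∈ G, τ v = v) ↔ ∃ m n : ℤ, v = m • Kv + n • Fv := by
  intro v
  constructor
  · intro hv
    have hE : ∀ j : Fin 7, v 0 = -2 * v (eIdx j) := by
      intro j
      obtain ⟨τ, hτG, hτE⟩ := hswap j
      have h := hform τ hτG v (Ev j)
      rw [hv τ hτG, hτE, B_FE, B_Ev] at h
      linarith
    have e0 : v 0 = -2 * v 2 := hE 0
    have e1 : v 0 = -2 * v 3 := hE 1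
    have e2 : v 0 = -2 * v 4 := hE 2
    have e3 : v 0 = -2 * v 5 := hE 3
    have e4 : v 0 = -2 * v 6 := hE 4
    have e5 : v 0 = -2 * v 7 := hE 5
    have e6 : v 0 = -2 * v 8 := hE 6
    refine ⟨v 2, v 1 + 2 * v 2, ?_⟩
    funext i
    fin_cases i <;>
      simp only [Pi.add_apply, Pi.smul_apply, smul_eq_mul]
    · show v 0 = v 2 * (-2) + (v 1 + 2 * v 2) * 0; linarith
    · show v 1 = v 2 * (-2) + (v 1 + 2 * v 2) * 1; ring
    · show v 2 = v 2 * 1 + (v 1 + 2 * v 2) * 0; ring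
    · show v 3 = v 2 * 1 + (v 1 + 2 * v 2) * 0; linarith
    · show v 4 = v 2 * 1 + (v 1 + 2 * v 2) * 0; linarith
    · show v 5 = v 2 * 1 + (v 1 + 2 * v 2) * 0; linarith
    · show v 6 = v 2 * 1 + (v 1 + 2 * v 2) * 0; linarith
    · show v 7 = v 2 * 1 + (v 1 + 2 * v 2) * 0; linarith
    · show v 8 = v 2 * 1 + (v 1 + 2 * v 2) * 0; linarith
  · rintro ⟨m, n, rfl⟩ τ hτ
    rw [map_add, map_smul, map_smul, hF τ hτ, hK τ hτ]
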